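/- Let R be a finite ring with q elements and H an m × n parity-check matrix over R. Suppose (f, w) ∈ Q. Define, for all j ∈ J and k ∈ T_j, σ_{j,k} = ∑_{b ∈ C_j, κ_j(b) = k} w_{j,b}, and for all j ∈ J, i ∈ I_j, k ∈ T_j, α ∈ R∖{0}, z_{i,j,k}^{(α)} = ∑_{b ∈ C_j, κ_j(b) = k, b_i = α} w_{j,b}. Then (f, σ, z) ∈ U. In particular, the projection of Q onto the f-coordinates is contained in the projection of U onto the f-coordinates. -/

import Mathlib

/-- `supp H j` is the support `I_j` of the `j`-th row of the parity-check matrix `H`. -/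
def supp {R : Type*} [Zero R] [DecidableEq R] {m n : ℕ}
    (H : Matrix (Fin m) (Fin n) R) (j : Fin m) : Finset (Fin n) :=
  Finset.univ.filter (fun i => H j i ≠ 0)

/-- `locC H j` is the local single-parity-check code `C_j`: vectors supported on `I_j`
satisfying `∑_{i ∈ I_j} b i · H j i = 0`. -/
def locC {R : Type*} [Ring R] [Fintype R] [DecidableEq R] {m n : ℕ}
    (H : Matrix (Fin m) (Fin n) R) (j : Fin m) : Finset (Fin n → R) :=
  Finset.univ.filter (fun b =>
    (∀ i, i ∉ supp H j → b i = 0) ∧ ∑ i ∈ supp H j, b i * H j i = 0)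

/-- `kappa H j b` is the composition map `κ_j`: for nonzero `α`, the number of
`i ∈ I_j` with `b i · H j i = α`. -/
def kappa {R : Type*} [Ring R] [Fintype R] [DecidableEq R] {m n : ℕ}
    (H : Matrix (Fin m) (Fin n) R) (j : Fin m) (b : Fin n → R) :
    {α : R // α ≠ 0} → ℕ :=
  fun α => ((supp H j).filter (fun i => b i * H j i = (α : R))).card

/-- `TjSet H j` is the set `T_j` of integer vectors `k = (k_α)_{α ≠ 0}` with
`∑ α, k α • α = 0` in `R` and `∑ α, k α ≤ d_j = |I_j|`. -/
def TjSet {R : Type*} [Ring R] [Fintype R] [DecidableEq R] {m n : ℕ}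
    (H : Matrix (Fin m) (Fin n) R) (j : Fin m) : Finset ({α : R // α ≠ 0} → ℕ) :=
  ((Finset.univ : Finset ({α : R // α ≠ 0} → Fin (n + 1))).image
      (fun g α => (g α : ℕ))).filter
    (fun k => (∑ α : {α : R // α ≠ 0}, (k α) • (α : R)) = 0 ∧
      ∑ α : {α : R // α ≠ 0}, k α ≤ (supp H j).card)

/-- Membership in the polytope `Q` of [FSBG]: `f` together with auxiliary variables
`w = (w_{j,b})_{j, b ∈ C_j}` satisfying nonnegativity, normalization, and marginals. -/
def memQ {R : Type*} [Ring R] [Fintype R] [DecidableEq R] {m n : ℕ}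
    (H : Matrix (Fin m) (Fin n) R)
    (f : Fin n → {α : R // α ≠ 0} → ℝ) (w : Fin m → (Fin n → R) → ℝ) : Prop :=
  (∀ j, ∀ b ∈ locC H j, 0 ≤ w j b) ∧
  (∀ j, ∑ b ∈ locC H j, w j b = 1) ∧
  (∀ j, ∀ i ∈ supp H j, ∀ α : {α : R // α ≠ 0},
    f i α = ∑ b ∈ (locC H j).filter (fun b => b i = (α : R)), w j b)

/-- Membership in the new polytope `U`, defined by constraints (7)-(11) of the paper. -/
def memU {R : Type*} [Ring R] [Fintype R] [DecidableEq R] {m n : ℕ}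
    (H : Matrix (Fin m) (Fin n) R)
    (f : Fin n → {α : R // α ≠ 0} → ℝ)
    (σ : Fin m → ({α : R // α ≠ 0} → ℕ) → ℝ)
    (z : Fin n → Fin m → ({α : R // α ≠ 0} → ℕ) → {α : R // α ≠ 0} → ℝ) : Prop :=
  ∀ j : Fin m,
    (∀ i ∈ supp H j, ∀ α : {α : R // α ≠ 0},
      f i α = ∑ k ∈ TjSet H j, z i j k α) ∧
    (∑ k ∈ TjSet H j, σ j k = 1) ∧
    (∀ k ∈ TjSet H j, ∀ α : {α : R // α ≠ 0},
      ∑ i ∈ supp H j, ∑ β ∈ Finset.univ.filter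
          (fun β : {α : R // α ≠ 0} => (β : R) * H j i = (α : R)), z i j k β
        = (k α : ℝ) * σ j k) ∧
    (∀ i ∈ supp H j, ∀ k ∈ TjSet H j, ∀ α : {α : R // α ≠ 0}, 0 ≤ z i j k α) ∧
    (∀ i ∈ supp H j, ∀ k ∈ TjSet H j,
      ∑ α : {α : R // α ≠ 0}, ∑ β ∈ Finset.univ.filter
          (fun β : {α : R // α ≠ 0} => (β : R) * H j i = (α : R)), z i j k β
        ≤ σ j k)

lemma sum_ite_nz {R : Type*} [Zero R] [Fintype R] [DecidableEq R] {M : Type*} [AddCommMonoid M]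
    (c : R) (x : M) :
    ∑ α : {α : R // α ≠ 0}, (if c = (α : R) then x else 0) =
      if c = 0 then 0 else x := by
  by_cases hc : c = 0
  · rw [if_pos hc]
    refine Finset.sum_eq_zero fun α _ => ?_
    rw [if_neg]
    exact fun h => α.2 (hc ▸ h.symm)
  · rw [if_neg hc]
    have h1 : ∀ α : {α : R // α ≠ 0},
        (if c = (α : R) then x else 0) =
        (if (⟨c, hc⟩ : {α : R // α ≠ 0}) = α then x else 0) := by
      intro α
      congr 1
      exact propext ⟨fun h => Subtype.ext h, fun h => congrArg Subtype.val h⟩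
    rw [Finset.sum_congr rfl (fun α _ => h1 α), Finset.sum_ite_eq]
    simp

lemma sum_ite_val {R : Type*} [Fintype R] [DecidableEq R] [Ring R] (c : R) :
    ∑ α : {α : R // α ≠ 0}, (if c = (α : R) then (α : R) else 0) = c := by
  have h : ∀ α : {α : R // α ≠ 0},
      (if c = (α : R) then (α : R) else 0) = (if c = (α : R) then c else 0) := by
    intro α; split <;> simp_all
  rw [Finset.sum_congr rfl (fun α _ => h α), sum_ite_nz]
  split <;> simp_all

lemma kappa_mem_TjSet {R : Type*} [Ring R] [Fintype R] [DecidableEq R] {m n : ℕ}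
    (H : Matrix (Fin m) (Fin n) R) (j : Fin m) (b : Fin n → R) (hb : b ∈ locC H j) :
    kappa H j b ∈ TjSet H j := by
  obtain ⟨-, hsum⟩ := (Finset.mem_filter.mp hb).2
  have hcard : ∀ α : {α : R // α ≠ 0}, kappa H j b α < n + 1 := by
    intro α
    have : kappa H j b α ≤ (supp H j).card := Finset.card_filter_le _ _
    have h2 : (supp H j).card ≤ n := by
      simpa using Finset.card_le_univ (supp H j)
    omega
  have hκ : ∀ α : {α : R // α ≠ 0}, kappa H j b α =
      ∑ i ∈ supp H j, (if b i * H j i = (α : R) then 1 else 0) := by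
    intro α; rw [kappa, Finset.card_filter]
  rw [TjSet, Finset.mem_filter]
  refine ⟨?_, ?_, ?_⟩
  · rw [Finset.mem_image]
    exact ⟨fun α => ⟨kappa H j b α, hcard α⟩, Finset.mem_univ _, rfl⟩
  · calc ∑ α : {α : R // α ≠ 0}, kappa H j b α • (α : R)
        = ∑ α : {α : R // α ≠ 0}, ∑ i ∈ supp H j,
            (if b i * H j i = (α : R) then (α : R) else 0) := by
          refine Finset.sum_congr rfl fun α _ => ?_
          rw [hκ α, Finset.sum_smul]
          exact Finset.sum_congr rfl fun i _ => by split <;> simp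
      _ = ∑ i ∈ supp H j, ∑ α : {α : R // α ≠ 0},
            (if b i * H j i = (α : R) then (α : R) else 0) := Finset.sum_comm
      _ = ∑ i ∈ supp H j, b i * H j i :=
          Finset.sum_congr rfl fun i _ => sum_ite_val _
      _ = 0 := hsum
  · calc ∑ α : {α : R // α ≠ 0}, kappa H j b α
        = ∑ i ∈ supp H j, ∑ α : {α : R // α ≠ 0},
            (if b i * H j i = (α : R) then 1 else 0) := by
          rw [Finset.sum_congr rfl (fun α _ => hκ α)]; exact Finset.sum_comm
      _ ≤ ∑ i ∈ supp H j, 1 := by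
          refine Finset.sum_le_sum fun i _ => ?_
          rw [sum_ite_nz]; split <;> omega
      _ = (supp H j).card := by simp

lemma collapse {R : Type*} [Ring R] [Fintype R] [DecidableEq R] {m n : ℕ}
    (H : Matrix (Fin m) (Fin n) R) (j : Fin m) (i : Fin n)
    (w : Fin m → (Fin n → R) → ℝ) (k : {α : R // α ≠ 0} → ℕ) (α : {α : R // α ≠ 0}) :
    ∑ β ∈ Finset.univ.filter
        (fun β : {α : R // α ≠ 0} => (β : R) * H j i = (α : R)),
      ∑ b ∈ (locC H j).filter (fun b => kappa H j b = k ∧ b i = (β : R)), w j b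
    = ∑ b ∈ (locC H j).filter
        (fun b => kappa H j b = k ∧ b i * H j i = (α : R)), w j b := by
  classical
  set s := (locC H j).filter (fun b => kappa H j b = k ∧ b i * H j i = (α : R)) with hs
  set g : (Fin n → R) → {α : R // α ≠ 0} :=
    fun b => if h : b i = 0 then α else ⟨b i, h⟩ with hg
  have hbne : ∀ b ∈ s, b i ≠ 0 := by
    intro b hb hbi
    have h2 := (Finset.mem_filter.mp hb).2.2
    rw [hbi, zero_mul] at h2
    exact α.2 h2.symm
  have hmaps : ∀ b ∈ s, g b ∈ Finset.univ.filter
      (fun β : {α : R // α ≠ 0} => (β : R) * H j i = (α : R)) := by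
    intro b hb
    rw [Finset.mem_filter]
    refine ⟨Finset.mem_univ _, ?_⟩
    rw [hg]; simp only [dif_neg (hbne b hb)]
    exact (Finset.mem_filter.mp hb).2.2
  have hfib : ∀ β ∈ Finset.univ.filter
      (fun β : {α : R // α ≠ 0} => (β : R) * H j i = (α : R)),
      s.filter (fun b => g b = β)
        = (locC H j).filter (fun b => kappa H j b = k ∧ b i = (β : R)) := by
    intro β hβ
    have hβH : (β : R) * H j i = (α : R) := (Finset.mem_filter.mp hβ).2
    ext b
    simp only [hs, Finset.mem_filter, and_assoc]
    constructor
    · rintro ⟨hbC, hbκ, hbH, hgb⟩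
      have hbi : b i ≠ 0 := by
        intro h0; rw [h0, zero_mul] at hbH; exact α.2 hbH.symm
      refine ⟨hbC, hbκ, ?_⟩
      rw [hg] at hgb; simp only [dif_neg hbi] at hgb
      exact congrArg Subtype.val hgb ▸ rfl
    · rintro ⟨hbC, hbκ, hbi⟩
      have hbi0 : b i ≠ 0 := hbi ▸ β.2
      refine ⟨hbC, hbκ, by rw [hbi, hβH], ?_⟩
      rw [hg]; simp only [dif_neg hbi0]
      exact Subtype.ext hbi
  rw [← Finset.sum_fiberwise_of_maps_to hmaps (w j)]
  exact Finset.sum_congr rfl fun β hβ => by rw [hfib β hβ]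

lemma main_lemma {R : Type*} [Ring R] [Fintype R] [DecidableEq R] {m n : ℕ}
    (H : Matrix (Fin m) (Fin n) R)
    (f : Fin n → {α : R // α ≠ 0} → ℝ) (w : Fin m → (Fin n → R) → ℝ)
    (hQ : memQ H f w) :
    memU H f
      (fun j k => ∑ b ∈ (locC H j).filter (fun b => kappa H j b = k), w j b)
      (fun i j k α =>
        ∑ b ∈ (locC H j).filter (fun b => kappa H j b = k ∧ b i = (α : R)), w j b) := by
  obtain ⟨hw0, hw1, hwf⟩ := hQ
  intro j
  refine ⟨?_, ?_, ?_, ?_, ?_⟩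
  · -- (i)
    intro i hi α
    rw [hwf j i hi α]
    have : ∀ k, (locC H j).filter (fun b => kappa H j b = k ∧ b i = (α : R))
        = ((locC H j).filter (fun b => b i = (α : R))).filter
            (fun b => kappa H j b = k) := by
      intro k; rw [Finset.filter_filter]
      exact Finset.filter_congr fun b _ => by tauto
    simp only [this]
    exact (Finset.sum_fiberwise_of_maps_to
      (fun b hb => kappa_mem_TjSet H j b (Finset.mem_filter.mp hb).1) _).symm
  · -- (ii)
    rw [Finset.sum_fiberwise_of_maps_to (fun b hb => kappa_mem_TjSet H j b hb)]
    exact hw1 j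
  · -- (iii)
    intro k hk α
    calc ∑ i ∈ supp H j, ∑ β ∈ Finset.univ.filter
            (fun β : {α : R // α ≠ 0} => (β : R) * H j i = (α : R)),
          ∑ b ∈ (locC H j).filter (fun b => kappa H j b = k ∧ b i = (β : R)), w j b
        = ∑ i ∈ supp H j, ∑ b ∈ (locC H j).filter
            (fun b => kappa H j b = k ∧ b i * H j i = (α : R)), w j b :=
          Finset.sum_congr rfl fun i _ => collapse H j i w k α
      _ = ∑ i ∈ supp H j, ∑ b ∈ (locC H j).filter (fun b => kappa H j b = k),
            (if b i * H j i = (α : R) then w j b else 0) := by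
          refine Finset.sum_congr rfl fun i _ => ?_
          rw [← Finset.sum_filter, Finset.filter_filter]
      _ = ∑ b ∈ (locC H j).filter (fun b => kappa H j b = k), ∑ i ∈ supp H j,
            (if b i * H j i = (α : R) then w j b else 0) := Finset.sum_comm
      _ = ∑ b ∈ (locC H j).filter (fun b => kappa H j b = k), (k α : ℝ) * w j b := by
          refine Finset.sum_congr rfl fun b hb => ?_
          rw [← Finset.sum_filter, Finset.sum_const]
          have hκ : kappa H j b = k := (Finset.mem_filter.mp hb).2
          have : ((supp H j).filter (fun i => b i * H j i = (α : R))).card = k α :=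
            congrFun hκ α
          rw [this, nsmul_eq_mul]
      _ = (k α : ℝ) * ∑ b ∈ (locC H j).filter (fun b => kappa H j b = k), w j b :=
          (Finset.mul_sum _ _ _).symm
  · -- (iv)
    intro i hi k hk α
    exact Finset.sum_nonneg fun b hb => hw0 j b (Finset.mem_filter.mp hb).1
  · -- (v)
    intro i hi k hk
    calc ∑ α : {α : R // α ≠ 0}, ∑ β ∈ Finset.univ.filter
            (fun β : {α : R // α ≠ 0} => (β : R) * H j i = (α : R)),
          ∑ b ∈ (locC H j).filter (fun b => kappa H j b = k ∧ b i = (β : R)), w j b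
        = ∑ α : {α : R // α ≠ 0}, ∑ b ∈ (locC H j).filter
            (fun b => kappa H j b = k ∧ b i * H j i = (α : R)), w j b :=
          Finset.sum_congr rfl fun α _ => collapse H j i w k α
      _ = ∑ α : {α : R // α ≠ 0}, ∑ b ∈ (locC H j).filter (fun b => kappa H j b = k),
            (if b i * H j i = (α : R) then w j b else 0) := by
          refine Finset.sum_congr rfl fun α _ => ?_
          rw [← Finset.sum_filter, Finset.filter_filter]
      _ = ∑ b ∈ (locC H j).filter (fun b => kappa H j b = k),
            ∑ α : {α : R // α ≠ 0},
            (if b i * H j i = (α : R) then w j b else 0) := Finset.sum_comm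
      _ ≤ ∑ b ∈ (locC H j).filter (fun b => kappa H j b = k), w j b := by
          refine Finset.sum_le_sum fun b hb => ?_
          rw [sum_ite_nz]
          have := hw0 j b (Finset.mem_filter.mp hb).1
          split <;> [exact this; exact le_refl _]

/-- **First part of the proof of Theorem 1.** Given `(f, w) ∈ Q`, the variables
`σ_{j,k} = ∑_{b ∈ C_j, κ_j(b) = k} w_{j,b}` and
`z_{i,j,k}^{(α)} = ∑_{b ∈ C_j, κ_j(b) = k, b_i = α} w_{j,b}`
place `(f, σ, z)` in `U`; in particular the projection of `Q` onto the
`f`-coordinates is contained in that of `U`. -/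
theorem Q_subset_U {R : Type*} [Ring R] [Fintype R] [DecidableEq R] {m n : ℕ}
    (H : Matrix (Fin m) (Fin n) R)
    (f : Fin n → {α : R // α ≠ 0} → ℝ) (w : Fin m → (Fin n → R) → ℝ)
    (hQ : memQ H f w) :
    memU H f
      (fun j k => ∑ b ∈ (locC H j).filter (fun b => kappa H j b = k), w j b)
      (fun i j k α =>
        ∑ b ∈ (locC H j).filter (fun b => kappa H j b = k ∧ b i = (α : R)), w j b) ∧
    {f : Fin n → {α : R // α ≠ 0} → ℝ | ∃ w, memQ H f w} ⊆
      {f : Fin n → {α : R // α ≠ 0} → ℝ | ∃ σ z, memU H f σ z} := by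
  refine ⟨main_lemma H f w hQ, ?_⟩
  rintro f' ⟨w', hw'⟩
  exact ⟨_, _, main_lemma H f' w' hw'⟩
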